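/- arXiv:2210.05080 — 3 statements merged into one kernel-verified Lean document; each statement's English description precedes it below -/
import Mathlib

section
/- If D1 and D2 are disjoint digraphs with dc(D1) ≥ k and dc(D2) ≥ k, then the directed Hajós join D = (D1,u1,v1) ▽ (D2,v2,u2) satisfies dc(D) ≥ k. -/
/-- A directed cycle (length ≥ 2, distinct vertices) of the digraph with arc relation `A`,
all of whose vertices lie in the set `S`. -/
def HasDicycleIn {V : Type*} (A : V → V → Prop) (S : Set V) : Prop :=
  ∃ n : ℕ, 2 ≤ n ∧ ∃ f : ZMod n → V, Function.Injective f ∧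
    (∀ i, f i ∈ S) ∧ (∀ i, A (f i) (f (i + 1)))

/-- An acyclic coloring: no color class contains a directed cycle. -/
def IsAcyclicColoring {V : Type*} (A : V → V → Prop) {k : ℕ} (c : V → Fin k) : Prop :=
  ∀ i : Fin k, ¬ HasDicycleIn A {v | c v = i}

/-- The dichromatic number of a digraph, given by its arc relation. -/
noncomputable def dichromatic {V : Type*} (A : V → V → Prop) : ℕ :=
  sInf {k | ∃ c : V → Fin k, IsAcyclicColoring A c}

/-- Vertex set of the directed Hajós join: disjoint union with `v2` removed
(`v2` is identified with `v1`, represented by `Sum.inl v1`). -/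
def HajosVerts (V1 V2 : Type*) (v2 : V2) := {x : V1 ⊕ V2 // x ≠ Sum.inr v2}

/-- Arc relation of the directed Hajós join `(D1,u1,v1) ▽ (D2,v2,u2)`:
delete the arcs `u1v1` and `v2u2`, identify `v1` with `v2`, add the arc `u1u2`. -/
def hajosJoin {V1 V2 : Type*} (A1 : V1 → V1 → Prop) (A2 : V2 → V2 → Prop)
    (u1 v1 : V1) (v2 u2 : V2) (x y : HajosVerts V1 V2 v2) : Prop :=
  (∃ a b : V1, x.1 = Sum.inl a ∧ y.1 = Sum.inl b ∧ A1 a b ∧ ¬(a = u1 ∧ b = v1)) ∨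
  (∃ a b : V2, x.1 = Sum.inr a ∧ y.1 = Sum.inr b ∧ A2 a b) ∨
  (∃ b : V2, x.1 = Sum.inl v1 ∧ y.1 = Sum.inr b ∧ A2 v2 b ∧ b ≠ u2) ∨
  (∃ a : V2, x.1 = Sum.inr a ∧ y.1 = Sum.inl v1 ∧ A2 a v2) ∨
  (x.1 = Sum.inl u1 ∧ y.1 = Sum.inr u2)

/-- Arc relation of the digraph obtained from `A` by identifying the set `I`
into a single new vertex (represented by `none`). -/
def identifyAdj {V : Type*} (A : V → V → Prop) (I : Set V) :
    Option {x : V // x ∉ I} → Option {x : V // x ∉ I} → Prop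
  | some a, some b => A a.1 b.1
  | none, some b => ∃ u ∈ I, A u b.1
  | some a, none => ∃ u ∈ I, A a.1 u
  | none, none => False

lemma inj_isAcyclicColoring {V : Type*} (A : V → V → Prop) {k : ℕ}
    (c : V → Fin k) (hc : Function.Injective c) : IsAcyclicColoring A c := by
  rintro i ⟨n, hn, f, hf, hS, -⟩
  haveI : Fact (1 < n) := ⟨hn⟩
  exact zero_ne_one (hf (hc ((hS 0).trans (hS 1).symm)))

lemma zmod_succ_val {N : ℕ} (hN : 2 ≤ N) (i : ZMod N) :
    haveI : NeZero N := ⟨by omega⟩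
    (i + 1).val = (i.val + 1) % N := by
  haveI : NeZero N := ⟨by omega⟩
  haveI : Fact (1 < N) := ⟨hN⟩
  rw [ZMod.val_add, ZMod.val_one]

lemma cast_ne_zero' {M : ℕ} [NeZero M] {a : ℕ} (ha : a ≠ 0) (hM : a < M) :
    (a : ZMod M) ≠ 0 := by
  intro h
  have h2 := ZMod.val_cast_of_lt hM
  rw [h, ZMod.val_zero] at h2
  exact ha h2.symm

lemma cast_inj' {M : ℕ} {a b : ℕ} (ha : a < M) (hb : b < M)
    (h : (a : ZMod M) = b) : a = b := by
  rw [← ZMod.val_cast_of_lt ha, ← ZMod.val_cast_of_lt hb, h]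

open Classical in
lemma hajos_key {V1 V2 : Type*} (A1 : V1 → V1 → Prop) (A2 : V2 → V2 → Prop)
    (u1 v1 : V1) (v2 u2 : V2) {m : ℕ}
    (c : HajosVerts V1 V2 v2 → Fin m)
    (hc : IsAcyclicColoring (hajosJoin A1 A2 u1 v1 v2 u2) c) :
    IsAcyclicColoring A1 (fun x => c ⟨Sum.inl x, by simp⟩) ∨
    IsAcyclicColoring A2 (fun x => if h : x = v2 then c ⟨Sum.inl v1, by simp⟩
      else c ⟨Sum.inr x, by simp [h]⟩) := by
  by_contra hcon
  push_neg at hcon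
  obtain ⟨hA1, hA2⟩ := hcon
  simp only [IsAcyclicColoring, not_forall, not_not] at hA1 hA2
  obtain ⟨i1, n, hn, f, hfinj, hfcol0, hfarc⟩ := hA1
  obtain ⟨i2, n', hn', g, hginj, hgcol0, hgarc⟩ := hA2
  haveI : NeZero n := ⟨by omega⟩
  haveI : NeZero n' := ⟨by omega⟩
  have hfcol : ∀ i, c ⟨Sum.inl (f i), by simp⟩ = i1 := fun i => hfcol0 i
  have hgcol : ∀ i, (if h : g i = v2 then c ⟨Sum.inl v1, by simp⟩
      else c ⟨Sum.inr (g i), by simp [h]⟩) = i2 := fun i => hgcol0 i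
  have hone' : (1 : ZMod n') ≠ 0 := by
    haveI : Fact (1 < n') := ⟨hn'⟩
    exact one_ne_zero
  -- Step 1: the D1-cycle must use the arc u1 → v1
  have step1 : ∃ j : ZMod n, f j = u1 ∧ f (j + 1) = v1 := by
    by_contra hno
    push_neg at hno
    refine hc i1 ⟨n, hn, fun i => ⟨Sum.inl (f i), by simp⟩, ?_, fun i => hfcol i, fun i => ?_⟩
    · intro a b hab
      exact hfinj (by simpa using congrArg Subtype.val hab)
    · exact Or.inl ⟨f i, f (i + 1), rfl, rfl, hfarc i, fun h => hno i h.1 h.2⟩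
  -- Step 2: the D2-cycle must use the arc v2 → u2
  have step2 : ∃ j : ZMod n', g j = v2 ∧ g (j + 1) = u2 := by
    by_contra hno
    push_neg at hno
    refine hc i2 ⟨n', hn', fun i => if h : g i = v2 then ⟨Sum.inl v1, by simp⟩
        else ⟨Sum.inr (g i), by simp [h]⟩, ?_, ?_, ?_⟩
    · intro a b hab
      simp only at hab
      by_cases h1 : g a = v2 <;> by_cases h2 : g b = v2
      · exact hginj (h1.trans h2.symm)
      · have hab := (dif_pos h1).symm.trans (hab.trans (dif_neg h2)); exact absurd (congrArg Subtype.val hab) (by simp)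
      · have hab := (dif_neg h1).symm.trans (hab.trans (dif_pos h2)); exact absurd (congrArg Subtype.val hab) (by simp)
      · have hab := (dif_neg h1).symm.trans (hab.trans (dif_neg h2)); exact hginj (by simpa using congrArg Subtype.val hab)
    · intro i
      have h := hgcol i
      show c (if h : g i = v2 then ⟨Sum.inl v1, by simp⟩ else ⟨Sum.inr (g i), by simp [h]⟩) = i2
      exact (apply_dite c _ _ _).trans h
    · intro i
      have harc := hgarc i
      by_cases h0 : g i = v2 <;> by_cases h1 : g (i + 1) = v2
      · exfalso
        have := hginj (h0.trans h1.symm)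
        have h10 : (1 : ZMod n') = 0 := by
          have := left_eq_add.mp this
          exact this
        exact hone' h10
      · refine Or.inr (Or.inr (Or.inl ⟨g (i + 1), by simp [h0], by simp [h1], ?_, ?_⟩))
        · rw [← h0]; exact harc
        · exact hno i h0
      · exact Or.inr (Or.inr (Or.inr (Or.inl ⟨g i, by simp [h0], by simp [h1], by rw [← h1]; exact harc⟩)))
      · exact Or.inr (Or.inl ⟨g i, g (i + 1), by simp [h0], by simp [h1], harc⟩)
  obtain ⟨j, hju, hjv⟩ := step1
  obtain ⟨j', hjv2, hju2⟩ := step2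
  have hi12 : i2 = i1 := by
    have ha' : c ⟨Sum.inl v1, by simp⟩ = i1 := by
      have := hfcol (j + 1); rwa [hjv] at this
    have hb' : c ⟨Sum.inl v1, by simp⟩ = i2 := by
      have := hgcol j'; rwa [dif_pos hjv2] at this
    rw [← ha', ← hb']
  set N := n + n' - 1 with hNdef
  have hN : 2 ≤ N := by omega
  haveI : NeZero N := ⟨by omega⟩
  have hnN : n < N := by omega
  set F : ZMod N → HajosVerts V1 V2 v2 := fun i =>
    if hr : i.val < n then ⟨Sum.inl (f (j + 1 + (i.val : ZMod n))), by simp⟩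
    else ⟨Sum.inr (g (j' + 1 + ((i.val - n : ℕ) : ZMod n'))), by
      simp only [ne_eq, Sum.inr.injEq]
      intro h
      rw [← hjv2] at h
      have h2 := hginj h
      have h3 : (1 : ZMod n') + ((i.val - n : ℕ) : ZMod n') = 0 := by
        have h4 : j' + (1 + ((i.val - n : ℕ) : ZMod n')) = j' + 0 := by
          rw [add_zero, ← add_assoc]; exact h2
        exact add_left_cancel h4
      have h5 : (((1 + (i.val - n) : ℕ)) : ZMod n') = 0 := by push_cast; exact h3
      have hvi := ZMod.val_lt i
      exact cast_ne_zero' (by omega) (by omega) h5⟩ with hF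
  have hF1 : ∀ (i : ZMod N) (hr : i.val < n),
      (F i).1 = Sum.inl (f (j + 1 + (i.val : ZMod n))) := by
    intro i hr; simp only [hF]; exact congrArg Subtype.val (dif_pos hr)
  have hF2 : ∀ (i : ZMod N) (hr : ¬ i.val < n),
      (F i).1 = Sum.inr (g (j' + 1 + ((i.val - n : ℕ) : ZMod n'))) := by
    intro i hr; simp only [hF]; exact congrArg Subtype.val (dif_neg hr)
  refine hc i1 ⟨N, hN, F, ?_, ?_, ?_⟩
  · -- injectivity
    intro a b hab
    have hval := congrArg Subtype.val hab
    have hav := ZMod.val_lt a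
    have hbv := ZMod.val_lt b
    refine ZMod.val_injective N ?_
    by_cases ha : a.val < n <;> by_cases hb : b.val < n
    · rw [hF1 a ha, hF1 b hb] at hval
      have h2 := hfinj (Sum.inl.inj hval)
      have h3 := add_left_cancel h2
      exact cast_inj' ha hb h3
    · rw [hF1 a ha, hF2 b hb] at hval; exact absurd hval (by simp)
    · rw [hF2 a ha, hF1 b hb] at hval; exact absurd hval (by simp)
    · rw [hF2 a ha, hF2 b hb] at hval
      have h2 := hginj (Sum.inr.inj hval)
      have h3 := add_left_cancel h2
      have h4 := cast_inj' (show a.val - n < n' from by omega)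
        (show b.val - n < n' from by omega) h3
      omega
  · -- colors
    intro i
    show c (F i) = i1
    by_cases hr : i.val < n
    · have heq : F i = ⟨Sum.inl (f (j + 1 + (i.val : ZMod n))), by simp⟩ :=
        Subtype.ext (hF1 i hr)
      rw [heq]; exact hfcol _
    · have hgv : g (j' + 1 + ((i.val - n : ℕ) : ZMod n')) ≠ v2 := by
        have h2 := (F i).2
        rw [hF2 i hr] at h2
        simpa using h2
      have heq : F i = ⟨Sum.inr (g (j' + 1 + ((i.val - n : ℕ) : ZMod n'))), by simp [hgv]⟩ :=
        Subtype.ext (hF2 i hr)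
      rw [heq]
      have h := hgcol (j' + 1 + ((i.val - n : ℕ) : ZMod n'))
      rw [dif_neg hgv] at h
      exact h.trans hi12
  · -- arcs
    intro i
    have hrlt : i.val < N := ZMod.val_lt i
    have hs := zmod_succ_val hN i
    by_cases hA : i.val + 1 < n
    · have hsv : (i + 1).val = i.val + 1 := by rw [hs, Nat.mod_eq_of_lt (by omega)]
      refine Or.inl ⟨f (j + 1 + (i.val : ZMod n)), f (j + 1 + (i.val : ZMod n) + 1),
        hF1 i (by omega), ?_, hfarc _, ?_⟩
      · rw [hF1 (i + 1) (by omega)]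
        have hidx : (((i + 1).val : ℕ) : ZMod n) = (i.val : ZMod n) + 1 := by
          rw [hsv]; push_cast; ring
        rw [hidx, ← add_assoc]
      · rintro ⟨ha, -⟩
        have h2 := hfinj (ha.trans hju.symm)
        have h3 : ((1 + i.val : ℕ) : ZMod n) = 0 := by
          push_cast
          have h4 : j + (1 + (i.val : ZMod n)) = j + 0 := by
            rw [add_zero, ← add_assoc]; exact h2
          exact add_left_cancel h4
        exact cast_ne_zero' (by omega) (by omega) h3
    · by_cases hB : i.val + 1 = n
      · have hsv : (i + 1).val = n := by rw [hs, hB, Nat.mod_eq_of_lt hnN]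
        refine Or.inr (Or.inr (Or.inr (Or.inr ⟨?_, ?_⟩)))
        · rw [hF1 i (by omega)]
          have h0 : (1 : ZMod n) + (i.val : ZMod n) = 0 := by
            have h1' : ((1 + i.val : ℕ) : ZMod n) = 0 := by
              rw [show 1 + i.val = n from by omega]; exact ZMod.natCast_self n
            push_cast at h1'; exact h1'
          rw [add_assoc, h0, add_zero, hju]
        · rw [hF2 (i + 1) (by omega), hsv, Nat.sub_self, Nat.cast_zero, add_zero, hju2]
      · have hge : n ≤ i.val := by omega
        by_cases hD : i.val + 1 = N
        · have hsv : (i + 1).val = 0 := by rw [hs, hD, Nat.mod_self]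
          refine Or.inr (Or.inr (Or.inr (Or.inl
            ⟨g (j' + 1 + ((i.val - n : ℕ) : ZMod n')), hF2 i (by omega), ?_, ?_⟩)))
          · rw [hF1 (i + 1) (by omega), hsv, Nat.cast_zero, add_zero, hjv]
          · have hidx : j' + 1 + ((i.val - n : ℕ) : ZMod n') + 1 = j' := by
              have h0 : ((1 + (i.val - n) + 1 : ℕ) : ZMod n') = 0 := by
                rw [show 1 + (i.val - n) + 1 = n' from by omega]
                exact ZMod.natCast_self n'
              push_cast at h0
              calc j' + 1 + ((i.val - n : ℕ) : ZMod n') + 1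
                  = j' + (1 + ((i.val - n : ℕ) : ZMod n') + 1) := by ring
                _ = j' + 0 := by rw [h0]
                _ = j' := add_zero _
            have h2 := hgarc (j' + 1 + ((i.val - n : ℕ) : ZMod n'))
            rw [hidx, hjv2] at h2
            exact h2
        · have hsv : (i + 1).val = i.val + 1 := by rw [hs, Nat.mod_eq_of_lt (by omega)]
          refine Or.inr (Or.inl ⟨g (j' + 1 + ((i.val - n : ℕ) : ZMod n')),
            g (j' + 1 + ((i.val - n : ℕ) : ZMod n') + 1), hF2 i (by omega), ?_, hgarc _⟩)
          rw [hF2 (i + 1) (by omega)]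
          have hidx : (((i + 1).val - n : ℕ) : ZMod n') = ((i.val - n : ℕ) : ZMod n') + 1 := by
            rw [hsv, show i.val + 1 - n = (i.val - n) + 1 from by omega]; push_cast; ring
          rw [hidx, ← add_assoc]

/-- If `dc(D1) ≥ k` and `dc(D2) ≥ k`, then the directed Hajós join
`(D1,u1,v1) ▽ (D2,v2,u2)` satisfies `dc ≥ k`. -/
theorem le_dichromatic_hajosJoin {V1 V2 : Type*} [Fintype V1] [Fintype V2]
    (A1 : V1 → V1 → Prop) (A2 : V2 → V2 → Prop)
    (u1 v1 : V1) (v2 u2 : V2) (h1 : A1 u1 v1) (h2 : A2 v2 u2) (k : ℕ)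
    (hk1 : k ≤ dichromatic A1) (hk2 : k ≤ dichromatic A2) :
    k ≤ dichromatic (hajosJoin A1 A2 u1 v1 v2 u2) := by
  classical
  haveI : Fintype (HajosVerts V1 V2 v2) := Subtype.fintype _
  have hmem : Fintype.card (HajosVerts V1 V2 v2) ∈
      {k | ∃ c : HajosVerts V1 V2 v2 → Fin k,
        IsAcyclicColoring (hajosJoin A1 A2 u1 v1 v2 u2) c} :=
    ⟨⇑(Fintype.equivFin _), inj_isAcyclicColoring _ _ (Equiv.injective _)⟩
  rw [dichromatic]
  refine le_csInf ⟨_, hmem⟩ ?_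
  rintro m ⟨c, hcm⟩
  rcases hajos_key A1 A2 u1 v1 v2 u2 c hcm with h | h
  · exact hk1.trans (Nat.sInf_le ⟨_, h⟩)
  · exact hk2.trans (Nat.sInf_le ⟨_, h⟩)
end

section
/- Every Hajós-k-constructible digraph has dichromatic number at least k. -/
/-- The class of Hajós-`k`-constructible digraphs (on vertex sets `Fin n`):
the smallest family containing the complete symmetric digraph `D(K_k)` and closed
(up to isomorphism) under the directed Hajós join and identification of
independent sets of vertices. -/
inductive HajosConstructible (k : ℕ) : (n : ℕ) → (Fin n → Fin n → Prop) → Prop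
  | base : HajosConstructible k k (fun u v => u ≠ v)
  | join {n1 n2 m : ℕ} {A1 : Fin n1 → Fin n1 → Prop} {A2 : Fin n2 → Fin n2 → Prop}
      {u1 v1 : Fin n1} {v2 u2 : Fin n2} {B : Fin m → Fin m → Prop}
      (h1 : HajosConstructible k n1 A1) (h2 : HajosConstructible k n2 A2)
      (ha1 : A1 u1 v1) (ha2 : A2 v2 u2)
      (e : HajosVerts (Fin n1) (Fin n2) v2 ≃ Fin m)
      (he : ∀ x y, hajosJoin A1 A2 u1 v1 v2 u2 x y ↔ B (e x) (e y)) :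
      HajosConstructible k m B
  | ident {n m : ℕ} {A : Fin n → Fin n → Prop} {I : Set (Fin n)}
      {B : Fin m → Fin m → Prop}
      (h : HajosConstructible k n A) (hne : I.Nonempty)
      (hind : ∀ u ∈ I, ∀ v ∈ I, u ≠ v → ¬ A u v)
      (e : Option {x : Fin n // x ∉ I} ≃ Fin m)
      (he : ∀ x y, identifyAdj A I x y ↔ B (e x) (e y)) :
      HajosConstructible k m B

namespace HajosAux
open List
variable {V W : Type*}


open List

variable {V W : Type*}


lemma chainCons {R : V → V → Prop} {a b : V} {l : List V} :
    Chain R a (b :: l) ↔ R a b ∧ Chain R b l := isChain_cons_cons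

lemma chainSplit {R : V → V → Prop} {a c : V} {l₁ l₂ : List V} :
    Chain R a (l₁ ++ c :: l₂) ↔ Chain R a (l₁ ++ [c]) ∧ Chain R c l₂ := isChain_cons_split

lemma chainIffGet {R : V → V → Prop} {a : V} {l : List V} :
    Chain R a l ↔ (∀ h : 0 < l.length, R a (l.get ⟨0, h⟩)) ∧
      ∀ (i : ℕ) (h : i < l.length - 1), R (l.get ⟨i, by omega⟩) (l.get ⟨i + 1, by omega⟩) := by
  cases l with
  | nil => simp [Chain]
  | cons b t =>
    rw [chainCons]
    show R a b ∧ IsChain R (b :: t) ↔ _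
    rw [isChain_iff_getElem]
    simp only [List.get_eq_getElem, List.length_cons]
    constructor
    · rintro ⟨h1, h2⟩; exact ⟨fun _ => h1, fun i hi => h2 i (by omega)⟩
    · rintro ⟨h1, h2⟩; exact ⟨h1 (by omega), fun i hi => h2 i (by omega)⟩

/-- cyclic list representation of a dicycle -/
def Cyc (A : V → V → Prop) (S : Set V) (v : V) (l : List V) : Prop :=
  l ≠ [] ∧ (v :: l).Nodup ∧ (∀ x ∈ v :: l, x ∈ S) ∧ List.Chain A v (l ++ [v])

lemma chain_and {A B : V → V → Prop} {a : V} {m : List V} (h1 : Chain A a m)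
    (h2 : Chain B a m) : Chain (fun x y => A x y ∧ B x y) a m := by
  induction m generalizing a with
  | nil => exact Chain.nil
  | cons b m ih =>
    rw [chainCons] at h1 h2 ⊢
    exact ⟨⟨h1.1, h2.1⟩, ih h1.2 h2.2⟩

lemma chain_map_mem {A : V → V → Prop} {B : W → W → Prop} (g : V → W) {a : V} {m : List V}
    (h : Chain A a m) (hc : ∀ x ∈ a :: m, ∀ y ∈ a :: m, A x y → B (g x) (g y)) :
    Chain B (g a) (m.map g) := by
  induction m generalizing a with
  | nil => exact Chain.nil
  | cons b m ih =>
    rw [chainCons] at h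
    refine Chain.cons (hc a (by simp) b (by simp) h.1) (ih h.2 ?_)
    intro x hx y hy
    refine hc x ?_ y ?_ <;> simp only [mem_cons] at * <;> tauto

lemma chain_prefix {A : V → V → Prop} {a : V} {l1 l2 : List V}
    (h : Chain A a (l1 ++ l2)) : Chain A a l1 := by
  induction l1 generalizing a with
  | nil => exact Chain.nil
  | cons b m ih =>
    rw [cons_append, chainCons] at h
    exact Chain.cons h.1 (ih h.2)

lemma chain_concat_iff {A : V → V → Prop} {a b : V} {l : List V} :
    Chain A a (l ++ [b]) ↔ Chain A a l ∧ A ((a :: l).getLast (by simp)) b := by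
  induction l generalizing a with
  | nil => simp [chainCons, Chain.nil]
  | cons c m ih =>
    rw [cons_append, chainCons, ih, chainCons, and_assoc]
    have : (a :: c :: m).getLast (by simp) = (c :: m).getLast (by simp) :=
      List.getLast_cons (by simp)
    rw [this]

lemma chain_tail_cond {A : V → V → Prop} {p : V → Prop} {a : V} {t : List V}
    (h : Chain A a t) (hp : ∀ y ∈ t, p y) :
    Chain (fun x y => A x y ∧ p y) a t := by
  induction t generalizing a with
  | nil => exact Chain.nil
  | cons b m ih =>
    rw [chainCons] at h
    exact Chain.cons ⟨h.1, hp b (by simp)⟩ (ih h.2 fun y hy => hp y (by simp [hy]))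

lemma map_getLast (g : V → W) (v : V) (l : List V) :
    (g v :: l.map g).getLast (by simp) = g ((v :: l).getLast (by simp)) := by
  induction l generalizing v with
  | nil => simp
  | cons b m ih =>
    rw [map_cons]
    rw [List.getLast_cons (by simp), List.getLast_cons (l := b :: m) (by simp)]
    exact ih b

lemma cyc_ne {A : V → V → Prop} {S : Set V} {v : V} {l : List V} (h : Cyc A S v l) :
    Chain (fun x y => x ≠ y) v (l ++ [v]) := by
  obtain ⟨hl, hnd, -, -⟩ := h
  rw [chain_concat_iff]
  constructor
  · exact (List.Pairwise.isChain hnd : Chain' _ (v :: l))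
  · have h1 : (v :: l).getLast (by simp) = l.getLast hl := List.getLast_cons hl
    rw [h1]
    intro hcon
    exact (List.nodup_cons.1 hnd).1 (hcon ▸ List.getLast_mem hl)

lemma cyc_rotate {A : V → V → Prop} {S : Set V} {v w : V} {l1 l2 : List V}
    (h : Cyc A S v (l1 ++ w :: l2)) : Cyc A S w (l2 ++ v :: l1) := by
  obtain ⟨-, hnd, hmem, hch⟩ := h
  have hp : (v :: (l1 ++ w :: l2)) ~ (w :: (l2 ++ v :: l1)) := by
    calc v :: (l1 ++ w :: l2) ~ v :: (w :: (l1 ++ l2)) := (List.perm_middle).cons v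
      _ ~ w :: (v :: (l1 ++ l2)) := List.Perm.swap w v _
      _ ~ w :: (v :: (l2 ++ l1)) := ((List.perm_append_comm).cons v).cons w
      _ ~ w :: (l2 ++ v :: l1) := (List.perm_middle.symm).cons w
  refine ⟨by simp, hp.nodup hnd, fun x hx => hmem x (hp.mem_iff.symm.1 hx), ?_⟩
  have hsp : Chain A v (l1 ++ [w]) ∧ Chain A w (l2 ++ [v]) := by
    have h2 := hch
    rw [append_assoc, cons_append] at h2
    exact chainSplit.1 h2
  rw [append_assoc, cons_append]
  exact chainSplit.2 ⟨hsp.2, hsp.1⟩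

lemma chain_find_bad {A A' : V → V → Prop} {v : V} {m : List V}
    (h : Chain A v m) (h' : ¬ Chain A' v m) :
    ∃ m1 b m2, m = m1 ++ b :: m2 ∧ A ((v :: m1).getLast (by simp)) b ∧
      ¬ A' ((v :: m1).getLast (by simp)) b := by
  induction m generalizing v with
  | nil => exact absurd Chain.nil h'
  | cons b m ih =>
    rw [chainCons] at h
    by_cases hb : A' v b
    · have h2 : ¬ Chain A' b m := fun hc => h' (Chain.cons hb hc)
      obtain ⟨m1, c, m2, rfl, hA, hA'⟩ := ih h.2 h2
      refine ⟨b :: m1, c, m2, rfl, ?_, ?_⟩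
      · rwa [List.getLast_cons (by simp)]
      · rwa [List.getLast_cons (by simp)]
    · exact ⟨[], b, m, rfl, by simpa using h.1, by simpa using hb⟩

/-- extract a path from `q` to `p` when a cycle must use the arc `(p,q)` -/
lemma cyc_path {A A' : V → V → Prop} {S : Set V} {p q : V}
    (hpq : ∀ x y, A x y → ¬ A' x y → x = p ∧ y = q)
    {v : V} {l : List V} (h : Cyc A S v l) (hbad : ¬ Chain A' v (l ++ [v])) :
    ∃ t : List V, (q :: t).Nodup ∧ (∀ x ∈ q :: t, x ∈ S) ∧ Chain A q t ∧
      (q :: t).getLast (by simp) = p ∧ (q :: t).length = (v :: l).length := by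
  obtain ⟨m1, b, m2, heq, hA, hA'⟩ := chain_find_bad h.2.2.2 hbad
  obtain ⟨hp1, rfl⟩ := hpq _ _ hA hA'
  rcases eq_or_ne m2 [] with rfl | hm2
  · -- the bad arc is the last one: l = m1, v = b
    obtain ⟨rfl, hv⟩ : l = m1 ∧ [v] = [b] := List.append_inj' heq (by simp)
    have hvb : v = b := by simpa using hv
    subst hvb
    exact ⟨l, h.2.1, h.2.2.1, chain_prefix h.2.2.2, hp1, rfl⟩
  · -- rotate the cycle
    have hm2' : m2 = m2.dropLast ++ [m2.getLast hm2] := (List.dropLast_append_getLast hm2).symm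
    rw [hm2', ← cons_append, ← append_assoc] at heq
    obtain ⟨hl, hv⟩ : l = m1 ++ b :: m2.dropLast ∧ [v] = [m2.getLast hm2] :=
      List.append_inj' heq (by simp)
    have hrot := cyc_rotate (v := v) (w := b) (l1 := m1) (l2 := m2.dropLast) (hl ▸ h)
    refine ⟨m2.dropLast ++ v :: m1, hrot.2.1, hrot.2.2.1,
      chain_prefix (l2 := [b]) hrot.2.2.2, ?_, ?_⟩
    · show ((b :: m2.dropLast) ++ (v :: m1)).getLast (by simp) = p
      rw [List.getLast_append_of_ne_nil _ (by simp)]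
      exact hp1
    · simp [hl]; omega

/-- mapping a cycle along an injective-on-vertices, arc-preserving map -/
lemma cyc_map {A : V → V → Prop} {B : W → W → Prop} {S : Set V} {T : Set W} {v : V} {l : List V}
    (h : Cyc A S v l) (g : V → W)
    (hinj : ∀ x ∈ v :: l, ∀ y ∈ v :: l, g x = g y → x = y)
    (harc : ∀ x ∈ v :: l, ∀ y ∈ v :: l, x ≠ y → A x y → B (g x) (g y))
    (hmem : ∀ x ∈ v :: l, g x ∈ T) : Cyc B T (g v) (l.map g) := by
  obtain ⟨hl, hnd, hmemS, hch⟩ := h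
  refine ⟨by simpa using hl, ?_, ?_, ?_⟩
  · have : (g v :: l.map g) = (v :: l).map g := by simp
    rw [this]
    exact List.Nodup.map_on (fun x hx y hy => hinj x hx y hy) hnd
  · intro x hx
    rw [show (g v :: l.map g) = (v :: l).map g by simp, List.mem_map] at hx
    obtain ⟨y, hy, rfl⟩ := hx
    exact hmem y hy
  · have hcomb := chain_and hch (cyc_ne ⟨hl, hnd, hmemS, hch⟩)
    have := chain_map_mem g hcomb (fun x hx y hy hxy => by
      have hx' : x ∈ v :: l := by simp [mem_cons, mem_append] at hx ⊢; tauto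
      have hy' : y ∈ v :: l := by simp [mem_cons, mem_append] at hy ⊢; tauto
      exact harc x hx' y hy' hxy.2 hxy.1)
    simpa using this

lemma cyc_hasDicycle {A : V → V → Prop} {S : Set V} {v : V} {l : List V}
    (h : Cyc A S v l) : HasDicycleIn A S := by
  obtain ⟨hl, hnd, hmem, hch⟩ := h
  set L := v :: l with hL
  have hn : 2 ≤ L.length := by
    cases l with
    | nil => exact absurd rfl hl
    | cons a t => simp [hL]
  haveI : NeZero L.length := ⟨by omega⟩
  -- cyclic arc property in terms of get
  have key : ∀ (j : ℕ) (hj : j < L.length),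
      A (L.get ⟨j, hj⟩) (L.get ⟨(j + 1) % L.length, Nat.mod_lt _ (by omega)⟩) := by
    obtain ⟨h0, hstep⟩ := chainIffGet.1 hch
    have hlen : (l ++ [v]).length = L.length := by simp [hL]
    have hgetM : ∀ (i : ℕ) (hi : i < L.length),
        (l ++ [v]).get ⟨i, by omega⟩ = L.get ⟨(i + 1) % L.length, Nat.mod_lt _ (by omega)⟩ := by
      intro i hi
      rcases lt_or_ge i l.length with hil | hil
      · have h1 : (l ++ [v]).get ⟨i, by omega⟩ = l.get ⟨i, hil⟩ := by
          simp [List.get_eq_getElem, List.getElem_append_left hil]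
        have h2 : (i + 1) % L.length = i + 1 := Nat.mod_eq_of_lt (by simp [hL]; omega)
        simp only [h2, h1]
        rfl
      · have hieq : i = l.length := by simp [hL] at hi; omega
        subst hieq
        have h2 : (l.length + 1) % L.length = 0 := by simp [hL]
        have h1 : (l ++ [v]).get ⟨l.length, by simp⟩ = v := by
          simp [List.get_eq_getElem, List.getElem_append_right]
        simp only [h2, h1]
        rfl
    intro j hj
    rcases Nat.eq_zero_or_pos j with rfl | hjpos
    · have := h0 (by simp)
      rw [hgetM 0 (by omega)] at this
      exact this
    · have hj1 : j - 1 < (l ++ [v]).length - 1 := by simp [hL] at hj ⊢; omega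
      have := hstep (j - 1) hj1
      rw [hgetM (j - 1) (by omega)] at this
      have hj1' : (j - 1 + 1) % L.length = j := by
        rw [Nat.sub_add_cancel hjpos]; exact Nat.mod_eq_of_lt hj
      rw [show (⟨(j-1)+1, by omega⟩ : Fin (l ++ [v]).length) = ⟨j, by omega⟩ by
        simp [Nat.sub_add_cancel hjpos]] at this
      rw [hgetM j hj] at this
      convert this using 3
      omega
  refine ⟨L.length, hn, fun i => L.get ⟨i.val, ZMod.val_lt i⟩, ?_, ?_, ?_⟩
  · intro a b hab
    have := (List.Nodup.get_inj_iff hnd).1 hab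
    exact ZMod.val_injective _ (by simpa using this)
  · intro i
    exact hmem _ (L.get_mem _)
  · intro i
    haveI : Fact (1 < L.length) := ⟨by omega⟩
    have hv : (i + 1).val = (i.val + 1) % L.length := by
      rw [ZMod.val_add, ZMod.val_one]
    simp only [hv]
    exact key i.val (ZMod.val_lt i)

lemma hasDicycle_cyc {A : V → V → Prop} {S : Set V}
    (h : HasDicycleIn A S) : ∃ v l, Cyc A S v l := by
  obtain ⟨n, hn, f, hinj, hmem, harc⟩ := h
  have hcast : ∀ a : ℕ, a < n → ((a : ZMod n)).val = a := fun a ha => ZMod.val_cast_of_lt ha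
  refine ⟨f 0, (List.range (n - 1)).map (fun j => f ((j + 1 : ℕ) : ZMod n)), ?_, ?_, ?_, ?_⟩
  · simp [List.range_eq_nil]; omega
  · rw [List.nodup_cons]
    constructor
    · intro hmem'
      rw [List.mem_map] at hmem'
      obtain ⟨j, hj, hfj⟩ := hmem'
      rw [List.mem_range] at hj
      have : ((0 : ℕ) : ZMod n) = ((j + 1 : ℕ) : ZMod n) := by
        apply hinj; simpa using hfj.symm
      have := congrArg ZMod.val this
      rw [hcast 0 (by omega), hcast (j + 1) (by omega)] at this
      omega
    · refine List.Nodup.map_on ?_ List.nodup_range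
      intro x hx y hy hxy
      rw [List.mem_range] at hx hy
      have := hinj hxy
      have := congrArg ZMod.val this
      rw [hcast (x + 1) (by omega), hcast (y + 1) (by omega)] at this
      omega
  · intro x hx
    rw [List.mem_cons] at hx
    rcases hx with rfl | hx
    · exact hmem 0
    · rw [List.mem_map] at hx
      obtain ⟨j, _, rfl⟩ := hx
      exact hmem _
  · rw [chainIffGet]
    have hlen : ((List.range (n - 1)).map (fun j => f ((j + 1 : ℕ) : ZMod n)) ++ [f 0]).length
        = n := by simp; omega
    have hget : ∀ (i : ℕ) (hi : i < n),
        ((List.range (n - 1)).map (fun j => f ((j + 1 : ℕ) : ZMod n)) ++ [f 0]).get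
          ⟨i, by omega⟩ = f ((i + 1 : ℕ) : ZMod n) := by
      intro i hi
      rcases lt_or_ge i (n - 1) with hi1 | hi1
      · rw [List.get_eq_getElem, List.getElem_append_left (by simpa using hi1)]
        simp
      · have : i = n - 1 := by omega
        subst this
        have hR : ((n - 1 + 1 : ℕ) : ZMod n) = 0 := by
          rw [show n - 1 + 1 = n by omega]; exact ZMod.natCast_self n
        rw [hR]
        simp [List.get_eq_getElem, List.getElem_append_right]
  -- ⊢ two components
    constructor
    · intro h0
      rw [hget 0 (by omega)]
      have := harc 0
      simpa using this
    · intro i hi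
      rw [hlen] at hi
      rw [hget i (by omega), hget (i + 1) (by omega)]
      have := harc ((i + 1 : ℕ) : ZMod n)
      convert this using 2
      push_cast
      ring


lemma acyclic_equiv {A : V → V → Prop} {B : W → W → Prop} (e : V ≃ W)
    (he : ∀ x y, A x y ↔ B (e x) (e y)) {j : ℕ} {c : W → Fin j}
    (hc : IsAcyclicColoring B c) : IsAcyclicColoring A (fun v => c (e v)) := by
  rintro i ⟨n, hn, f, hinj, hmem, harc⟩
  exact hc i ⟨n, hn, fun x => e (f x), e.injective.comp hinj, fun i' => hmem i',
    fun i' => (he _ _).1 (harc i')⟩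

lemma find_first {p : V → Prop} (l : List V) :
    (∀ x ∈ l, ¬ p x) ∨ ∃ l1 w l2, l = l1 ++ w :: l2 ∧ p w ∧ ∀ x ∈ l1, ¬ p x := by
  induction l with
  | nil => left; simp
  | cons a l ih =>
    by_cases ha : p a
    · exact Or.inr ⟨[], a, l, rfl, ha, by simp⟩
    · rcases ih with h | ⟨l1, w, l2, rfl, hw, hl1⟩
      · left; simpa [ha] using h
      · refine Or.inr ⟨a :: l1, w, l2, rfl, hw, ?_⟩
        intro x hx
        rcases List.mem_cons.1 hx with rfl | hx
        · exact ha
        · exact hl1 x hx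

end HajosAux

namespace HajosAux
open List

lemma key {k n : ℕ} {A : Fin n → Fin n → Prop} (h : HajosConstructible k n A) :
    ∀ (j : ℕ) (c : Fin n → Fin j), IsAcyclicColoring A c → k ≤ j := by
  induction h with
  | base =>
    intro j c hc
    have hinj : Function.Injective c := by
      intro u v huv
      by_contra hne
      refine hc (c u) ⟨2, le_refl 2, fun i => if i = 0 then u else v, ?_, ?_, ?_⟩
      · intro a b hab
        have h2 : ∀ x : ZMod 2, x = 0 ∨ x = 1 := by decide
        rcases h2 a with rfl | rfl <;> rcases h2 b with rfl | rfl <;>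
          simp_all <;> exact absurd hab.symm hne
      · intro i
        rcases (by decide : ∀ x : ZMod 2, x = 0 ∨ x = 1) i with rfl | rfl <;>
          simp [Set.mem_setOf_eq, huv]
      · intro i
        rcases (by decide : ∀ x : ZMod 2, x = 0 ∨ x = 1) i with rfl | rfl <;> simp <;>
          first | exact hne | exact fun hh => hne hh.symm | exact ⟨by decide, fun hh => hne hh.symm⟩
    simpa using Fintype.card_le_of_injective c hinj
  | @ident n m A I B h hne hind e he ih =>
    intro j c hc
    classical
    set σ : Fin n → Option {x : Fin n // x ∉ I} :=
      fun x => if h : x ∈ I then none else some ⟨x, h⟩ with hσ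
    have hd : IsAcyclicColoring (identifyAdj A I) (fun x => c (e x)) := acyclic_equiv e he hc
    apply ih j (fun x => c (e (σ x)))
    intro i hdic
    obtain ⟨v0, l0, hcyc0⟩ := hasDicycle_cyc hdic
    -- get a cycle whose head is in I, or with no vertex of I at all
    have hmain : ∀ (v : Fin n) (l : List (Fin n)),
        Cyc A {x | c (e (σ x)) = i} v l → v ∈ I → False := by
      intro v l hcyc hvI
      have hσv : σ v = none := by simp [hσ, hvI]
      rcases find_first (p := fun x => x ∈ I) l with hl | ⟨l1, w, l2, rfl, hwI, hl1⟩
      · -- no other vertex of the cycle is in I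
        have honlyv : ∀ x ∈ v :: l, x ∈ I → x = v := by
          intro x hx hxI
          rcases List.mem_cons.1 hx with rfl | hx
          · rfl
          · exact absurd hxI (hl x hx)
        refine hd i (cyc_hasDicycle (S := {y | c (e y) = i}) (hσv ▸ cyc_map hcyc σ ?_ ?_ ?_))
        · intro x hx y hy hxy
          by_cases hxI : x ∈ I <;> by_cases hyI : y ∈ I <;>
            simp [hσ, hxI, hyI] at hxy
          · exact (honlyv x hx hxI).trans (honlyv y hy hyI).symm
          · exact hxy
        · intro x hx y hy hxyne hxy
          by_cases hxI : x ∈ I <;> by_cases hyI : y ∈ I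
          · exact absurd ((honlyv x hx hxI).trans (honlyv y hy hyI).symm) hxyne
          · simp only [hσ, dif_pos hxI, dif_neg hyI]
            exact ⟨x, hxI, hxy⟩
          · simp only [hσ, dif_neg hxI, dif_pos hyI]
            exact ⟨y, hyI, hxy⟩
          · simp only [hσ, dif_neg hxI, dif_neg hyI]
            exact hxy
        · intro x hx
          exact hcyc.2.2.1 x hx
      · -- l = l1 ++ w :: l2 with w ∈ I, l1 disjoint from I
        have hnd := hcyc.2.1
        have hvnotl : v ∉ l1 ++ w :: l2 := (List.nodup_cons.1 hnd).1
        have hwnev : w ≠ v := by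
          intro hwv
          exact hvnotl (hwv ▸ (by simp : w ∈ l1 ++ w :: l2))
        have hl1ne : l1 ≠ [] := by
          intro hl1e
          subst hl1e
          have harc : A v w := by
            have := hcyc.2.2.2
            rw [List.nil_append, cons_append, chainCons] at this
            exact this.1
          exact hind v hvI w hwI (Ne.symm hwnev) harc
        have hσw : σ w = none := by simp [hσ, hwI]
        -- the chain on v :: l1 ++ [w]
        have hchfull := hcyc.2.2.2
        have hchvw : Chain A v (l1 ++ [w]) := by
          rw [append_assoc, cons_append] at hchfull
          exact (chainSplit.1 hchfull).1
        have hwnotl1 : w ∉ l1 := by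
          have := (List.nodup_cons.1 hnd).2
          intro hmem
          exact (List.disjoint_of_nodup_append this) hmem (by simp)
        have hnevl1 : (v :: l1).Nodup := by
          have h2 := (List.nodup_cons.1 hnd).2
          have : (v :: l1).Sublist (v :: (l1 ++ w :: l2)) :=
            List.Sublist.cons₂ v (List.sublist_append_left _ _)
          exact List.Nodup.sublist this hnd
        have hchne : Chain (fun x y => x ≠ y) v (l1 ++ [w]) := by
          rw [chain_concat_iff]
          constructor
          · exact (List.Pairwise.isChain hnevl1 : Chain' _ (v :: l1))
          · intro hcon
            have : w ∈ v :: l1 := hcon ▸ List.getLast_mem (by simp)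
            rcases List.mem_cons.1 this with h' | h'
            · exact hwnev h'
            · exact hwnotl1 h'
        have hchand := chain_and hchvw hchne
        -- map to identifyAdj
        have harccond : ∀ x ∈ v :: (l1 ++ [w]), ∀ y ∈ v :: (l1 ++ [w]),
            (A x y ∧ x ≠ y) → identifyAdj A I (σ x) (σ y) := by
          intro x hx y hy hxy
          have hxmem : x ∈ I → x = v ∨ x = w := by
            intro hxI
            rcases List.mem_cons.1 hx with rfl | hx'
            · exact Or.inl rfl
            · rcases List.mem_append.1 hx' with hx'' | hx''
              · exact absurd hxI (hl1 x hx'')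
              · exact Or.inr (by simpa using hx'')
          have hymem : y ∈ I → y = v ∨ y = w := by
            intro hyI
            rcases List.mem_cons.1 hy with rfl | hy'
            · exact Or.inl rfl
            · rcases List.mem_append.1 hy' with hy'' | hy''
              · exact absurd hyI (hl1 y hy'')
              · exact Or.inr (by simpa using hy'')
          by_cases hxI : x ∈ I <;> by_cases hyI : y ∈ I
          · exact absurd hxy.1 (hind x hxI y hyI hxy.2)
          · simp only [hσ, dif_pos hxI, dif_neg hyI]
            exact ⟨x, hxI, hxy.1⟩
          · simp only [hσ, dif_neg hxI, dif_pos hyI]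
            exact ⟨y, hyI, hxy.1⟩
          · simp only [hσ, dif_neg hxI, dif_neg hyI]
            exact hxy.1
        have hchmap : Chain (identifyAdj A I) none ((l1 ++ [w]).map σ) := by
          have := chain_map_mem σ hchand harccond
          rwa [hσv] at this
        -- build the cycle
        refine hd i (cyc_hasDicycle (S := {y | c (e y) = i}) (v := none) (l := l1.map σ) ⟨?_, ?_, ?_, ?_⟩)
        · simpa using hl1ne
        · rw [List.nodup_cons]
          constructor
          · intro hmem'
            rw [List.mem_map] at hmem'
            obtain ⟨x, hx, hfx⟩ := hmem'
            have hxI : x ∉ I := hl1 x hx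
            simp [hσ, hxI] at hfx
          · refine List.Nodup.map_on ?_ ((List.nodup_cons.1 hnevl1).2)
            intro x hx y hy hxy
            simp [hσ, hl1 x hx, hl1 y hy] at hxy
            exact hxy
        · intro x hx
          rcases List.mem_cons.1 hx with rfl | hx'
          · have : c (e (σ v)) = i := hcyc.2.2.1 v (by simp)
            rwa [hσv] at this
          · rw [List.mem_map] at hx'
            obtain ⟨y, hy, rfl⟩ := hx'
            exact hcyc.2.2.1 y (by simp [hy])
        · have : (l1 ++ [w]).map σ = l1.map σ ++ [none] := by simp [hσw]
          rwa [this] at hchmap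
    -- now dispatch using hmain
    rcases find_first (p := fun x => x ∈ I) (v0 :: l0) with hl | ⟨l1, w, l2, hsplit, hwI, hl1⟩
    · -- no vertex of I: direct map
      refine hd i (cyc_hasDicycle (S := {y | c (e y) = i}) (cyc_map hcyc0 σ ?_ ?_ ?_))
      · intro x hx y hy hxy
        simp [hσ, hl x hx, hl y hy] at hxy
        exact hxy
      · intro x hx y hy hne hxy
        simp only [hσ, dif_neg (hl x hx), dif_neg (hl y hy)]
        exact hxy
      · intro x hx
        exact hcyc0.2.2.1 x hx
    · -- rotate to w
      cases l1 with
      | nil =>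
        rw [List.nil_append] at hsplit
        injection hsplit with hv0 hl0
        subst hv0; subst hl0
        exact hmain _ _ hcyc0 hwI
      | cons a t =>
        rw [List.cons_append] at hsplit
        injection hsplit with hv0 hl0
        subst hv0
        exact hmain w (l2 ++ v0 :: t) (cyc_rotate (hl0 ▸ hcyc0)) hwI
  | @join n1 n2 m A1 A2 u1 v1 v2 u2 B h1 h2 ha1 ha2 e he ih1 ih2 =>
    intro j c hc
    classical
    set ι1 : Fin n1 → HajosVerts (Fin n1) (Fin n2) v2 :=
      fun x => ⟨Sum.inl x, by simp⟩ with hι1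
    set ι2 : Fin n2 → HajosVerts (Fin n1) (Fin n2) v2 :=
      fun x => if h : x = v2 then ⟨Sum.inl v1, by simp⟩ else ⟨Sum.inr x, by simp [h]⟩ with hι2
    have hι1inj : Function.Injective ι1 := by
      intro x y hxy
      exact Sum.inl.inj (congrArg Subtype.val hxy)
    have hι2ne : ∀ x, x ≠ v2 → (ι2 x).1 = Sum.inr x := by
      intro x hx
      simp [hι2, hx]
    have hι2v2 : (ι2 v2).1 = Sum.inl v1 := by simp [hι2]
    have hJac : IsAcyclicColoring (hajosJoin A1 A2 u1 v1 v2 u2) (fun x => c (e x)) :=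
      acyclic_equiv e he hc
    by_cases hA1 : IsAcyclicColoring A1 (fun x => c (e (ι1 x)))
    · exact ih1 j _ hA1
    by_cases hA2 : IsAcyclicColoring A2 (fun x => c (e (ι2 x)))
    · exact ih2 j _ hA2
    exfalso
    rw [IsAcyclicColoring] at hA1 hA2
    push_neg at hA1 hA2
    obtain ⟨i1, hd1⟩ := hA1
    obtain ⟨i2, hd2⟩ := hA2
    obtain ⟨va, la, hcyc1⟩ := hasDicycle_cyc hd1
    obtain ⟨vb, lb, hcyc2⟩ := hasDicycle_cyc hd2
    -- the cycle in D1 must use the arc (u1, v1)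
    have hbad1 : ¬ Chain (fun x y => A1 x y ∧ ¬(x = u1 ∧ y = v1)) va (la ++ [va]) := by
      intro hch
      refine hJac i1 (cyc_hasDicycle (S := {y | c (e y) = i1})
        (cyc_map ⟨hcyc1.1, hcyc1.2.1, hcyc1.2.2.1, hch⟩ ι1 ?_ ?_ ?_))
      · intro x _ y _ hxy
        exact hι1inj hxy
      · intro x _ y _ _ hxy
        exact Or.inl ⟨x, y, rfl, rfl, hxy.1, hxy.2⟩
      · intro x hx
        exact hcyc1.2.2.1 x hx
    obtain ⟨t1, hnd1, hmem1, hch1, hlast1, hlen1⟩ := cyc_path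
      (p := u1) (q := v1) (A' := fun x y => A1 x y ∧ ¬(x = u1 ∧ y = v1))
      (fun x y hxy hnxy => by tauto) hcyc1 hbad1
    -- the cycle in D2 must use the arc (v2, u2)
    have hbad2 : ¬ Chain (fun x y => A2 x y ∧ ¬(x = v2 ∧ y = u2)) vb (lb ++ [vb]) := by
      intro hch
      refine hJac i2 (cyc_hasDicycle (S := {y | c (e y) = i2})
        (cyc_map ⟨hcyc2.1, hcyc2.2.1, hcyc2.2.2.1, hch⟩ ι2 ?_ ?_ ?_))
      · intro x _ y _ hxy
        have h' : (ι2 x).1 = (ι2 y).1 := congrArg Subtype.val hxy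
        by_cases hx2 : x = v2 <;> by_cases hy2 : y = v2
        · rw [hx2, hy2]
        · exfalso
          rw [hx2, hι2v2, hι2ne y hy2] at h'
          cases h'
        · exfalso
          rw [hy2, hι2v2, hι2ne x hx2] at h'
          cases h'
        · rw [hι2ne x hx2, hι2ne y hy2] at h'
          exact Sum.inr.inj h'
      · intro x _ y _ hne hxy
        by_cases hx2 : x = v2 <;> by_cases hy2 : y = v2
        · exact absurd (hx2.trans hy2.symm) hne
        · subst hx2
          refine Or.inr (Or.inr (Or.inl ⟨y, hι2v2, hι2ne y hy2, hxy.1, ?_⟩))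
          intro hyu2
          exact hxy.2 ⟨rfl, hyu2⟩
        · subst hy2
          exact Or.inr (Or.inr (Or.inr (Or.inl ⟨x, hι2ne x hx2, hι2v2, hxy.1⟩)))
        · exact Or.inr (Or.inl ⟨x, y, hι2ne x hx2, hι2ne y hy2, hxy.1⟩)
      · intro x hx
        exact hcyc2.2.2.1 x hx
    obtain ⟨t2, hnd2, hmem2, hch2, hlast2, hlen2⟩ := cyc_path
      (p := v2) (q := u2) (A' := fun x y => A2 x y ∧ ¬(x = v2 ∧ y = u2))
      (fun x y hxy hnxy => by tauto) hcyc2 hbad2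
    -- basic facts about the two paths
    have ht1ne : t1 ≠ [] := by
      intro hte
      rw [hte] at hlen1
      have := hcyc1.1
      cases la with
      | nil => exact this rfl
      | cons a t => simp at hlen1
    have ht2ne : t2 ≠ [] := by
      intro hte
      rw [hte] at hlen2
      have := hcyc2.1
      cases lb with
      | nil => exact this rfl
      | cons a t => simp at hlen2
    have hlastt2 : t2.getLast ht2ne = v2 := by
      rw [List.getLast_cons ht2ne] at hlast2
      exact hlast2
    have ht2eq : t2.dropLast ++ [v2] = t2 := by
      conv_rhs => rw [← List.dropLast_append_getLast ht2ne]
      rw [hlastt2]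
    have hnt2 : t2.Nodup := (List.nodup_cons.1 hnd2).2
    have hu2nott2 : u2 ∉ t2 := (List.nodup_cons.1 hnd2).1
    have hu2v2 : u2 ≠ v2 := by
      intro hx
      apply hu2nott2
      rw [hx, ← hlastt2]
      exact List.getLast_mem ht2ne
    have hQ'v2 : ∀ x ∈ u2 :: t2.dropLast, x ≠ v2 := by
      intro x hx hxv
      subst hxv
      rcases List.mem_cons.1 hx with h' | h'
      · exact hu2v2 h'.symm
      · have hdisj := List.disjoint_of_nodup_append (ht2eq ▸ hnt2)
        exact hdisj h' (by simp)
    -- color classes agree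
    have hv2mem : v2 ∈ u2 :: t2 := by
      rw [← hlastt2]
      exact List.mem_cons_of_mem _ (List.getLast_mem ht2ne)
    have hi21 : i2 = i1 := by
      have hbv : c (e (ι2 v2)) = i2 := hmem2 v2 hv2mem
      have hav : c (e (ι1 v1)) = i1 := hmem1 v1 (by simp)
      have hvv : ι2 v2 = ι1 v1 := by
        apply Subtype.ext
        rw [hι2v2]
      rw [hvv, hav] at hbv
      exact hbv.symm
    -- chains for the two arcs of the join cycle
    have hch1' : Chain (fun x y => A1 x y ∧ y ≠ v1) v1 t1 :=
      chain_tail_cond hch1 (fun y hy hyv => (List.nodup_cons.1 hnd1).1 (hyv ▸ hy))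
    have hchP : Chain (hajosJoin A1 A2 u1 v1 v2 u2) (ι1 v1) (t1.map ι1) :=
      chain_map_mem ι1 hch1' (fun x _ y _ hxy =>
        Or.inl ⟨x, y, rfl, rfl, hxy.1, fun hcc => hxy.2 hcc.2⟩)
    have hchQ0 : Chain A2 u2 t2.dropLast := chain_prefix (l2 := [v2]) (by rw [ht2eq]; exact hch2)
    have hlastarc : A2 ((u2 :: t2.dropLast).getLast (by simp)) v2 := by
      have h' := hch2
      rw [← ht2eq] at h'
      exact (chain_concat_iff.1 h').2
    have hchQ : Chain (hajosJoin A1 A2 u1 v1 v2 u2) (ι2 u2) (t2.dropLast.map ι2) :=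
      chain_map_mem ι2 hchQ0 (fun x hx y hy hxy =>
        Or.inr (Or.inl ⟨x, y, hι2ne x (hQ'v2 x hx), hι2ne y (hQ'v2 y hy), hxy⟩))
    have hgetP : (ι1 v1 :: t1.map ι1).getLast (by simp) = ι1 u1 := by
      rw [map_getLast, hlast1]
    have harc5 : hajosJoin A1 A2 u1 v1 v2 u2 (ι1 u1) (ι2 u2) :=
      Or.inr (Or.inr (Or.inr (Or.inr ⟨rfl, hι2ne u2 hu2v2⟩)))
    have hgetQ : (ι2 u2 :: t2.dropLast.map ι2).getLast (by simp)
        = ι2 ((u2 :: t2.dropLast).getLast (by simp)) := map_getLast ι2 u2 t2.dropLast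
    have harc4 : hajosJoin A1 A2 u1 v1 v2 u2 (ι2 ((u2 :: t2.dropLast).getLast (by simp))) (ι1 v1) :=
      Or.inr (Or.inr (Or.inr (Or.inl ⟨(u2 :: t2.dropLast).getLast (by simp),
        hι2ne _ (hQ'v2 _ (List.getLast_mem (by simp))), rfl, hlastarc⟩)))
    -- assemble the join cycle
    refine hJac i1 (cyc_hasDicycle (S := {y | c (e y) = i1})
      (v := ι1 v1) (l := t1.map ι1 ++ ι2 u2 :: t2.dropLast.map ι2) ⟨?_, ?_, ?_, ?_⟩)
    · simp
    · have heqL : ι1 v1 :: (t1.map ι1 ++ ι2 u2 :: t2.dropLast.map ι2)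
          = (v1 :: t1).map ι1 ++ (u2 :: t2.dropLast).map ι2 := by simp
      rw [heqL]
      refine List.Nodup.append (hnd1.map hι1inj) ?_ ?_
      · refine List.Nodup.map_on ?_ ?_
        · intro x hx y hy hxy
          have hx' := hι2ne x (hQ'v2 x hx)
          have hy' := hι2ne y (hQ'v2 y hy)
          have : (ι2 x).1 = (ι2 y).1 := by rw [hxy]
          rw [hx', hy'] at this
          exact Sum.inr.inj this
        · have : (u2 :: t2.dropLast).Sublist (u2 :: t2) :=
            List.Sublist.cons₂ u2 (List.dropLast_sublist t2)
          exact this.nodup hnd2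
      · intro a ha hb
        rw [List.mem_map] at ha hb
        obtain ⟨x, hx, rfl⟩ := ha
        obtain ⟨y, hy, hyx⟩ := hb
        have h1 : (ι1 x).1 = Sum.inl x := rfl
        have h2 : (ι2 y).1 = Sum.inr y := hι2ne y (hQ'v2 y hy)
        rw [hyx, h1] at h2
        cases h2
    · intro x hx
      rcases List.mem_cons.1 hx with rfl | hx'
      · exact hmem1 v1 (by simp)
      · rcases List.mem_append.1 hx' with h' | h'
        · rw [List.mem_map] at h'
          obtain ⟨y, hy, rfl⟩ := h'
          exact hmem1 y (by simp [hy])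
        · rcases List.mem_cons.1 h' with rfl | h''
          · have := hmem2 u2 (by simp)
            rw [hi21] at this
            exact this
          · rw [List.mem_map] at h''
            obtain ⟨y, hy, rfl⟩ := h''
            have := hmem2 y (List.mem_cons_of_mem _ ((List.dropLast_sublist t2).mem hy))
            rw [hi21] at this
            exact this
    · rw [show (t1.map ι1 ++ ι2 u2 :: t2.dropLast.map ι2) ++ [ι1 v1]
          = t1.map ι1 ++ ι2 u2 :: (t2.dropLast.map ι2 ++ [ι1 v1]) by simp]
      refine chainSplit.2 ⟨?_, ?_⟩
      · exact chain_concat_iff.2 ⟨hchP, hgetP ▸ harc5⟩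
      · refine chain_concat_iff.2 ⟨hchQ, ?_⟩
        rw [hgetQ]
        exact harc4

end HajosAux

/-- Every Hajós-`k`-constructible digraph has dichromatic number at least `k`. -/
theorem hajosConstructible_dichromatic_ge (k n : ℕ) (A : Fin n → Fin n → Prop)
    (h : HajosConstructible k n A) : k ≤ dichromatic A := by
  have hself : IsAcyclicColoring A (id : Fin n → Fin n) := by
    rintro i ⟨m, hm, f, hinj, hmem, -⟩
    haveI : NeZero m := ⟨by omega⟩
    haveI : Fact (1 < m) := ⟨by omega⟩
    have h0 : f 0 = i := hmem 0
    have h1 : f 1 = i := hmem 1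
    have h01 : (0 : ZMod m) = 1 := hinj (h0.trans h1.symm)
    have hval := congrArg ZMod.val h01
    rw [ZMod.val_zero, ZMod.val_one] at hval
    exact absurd hval (by omega)
  have hne : {k' | ∃ c : Fin n → Fin k', IsAcyclicColoring A c}.Nonempty :=
    ⟨n, (id : Fin n → Fin n), hself⟩
  obtain ⟨c, hac⟩ := Nat.sInf_mem hne
  exact HajosAux.key h _ c hac
end

section
/- The explicit digraph D3 on vertices v0,...,v4 with digons v0v1, v0v4, v1v2, v2v3, v3v4 (i.e., the symmetric 5-cycle) is obtainable from D(K3) by a sequence of directed Hajós joins and identifications of independent vertices; in particular, D(C5) is Hajós-3-constructible. -/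

instance {V1 V2 : Type*} [DecidableEq V1] [DecidableEq V2] [Fintype V1] [Fintype V2]
    {v2 : V2} : Fintype (HajosVerts V1 V2 v2) :=
  inferInstanceAs (Fintype {x : V1 ⊕ V2 // x ≠ Sum.inr v2})

instance {V1 V2 : Type*} [DecidableEq V1] [DecidableEq V2] {v2 : V2} :
    DecidableEq (HajosVerts V1 V2 v2) :=
  inferInstanceAs (DecidableEq {x : V1 ⊕ V2 // x ≠ Sum.inr v2})

instance {V1 V2 : Type*} [DecidableEq V1] [DecidableEq V2] [Fintype V1] [Fintype V2]
    {A1 : V1 → V1 → Prop} {A2 : V2 → V2 → Prop} [DecidableRel A1] [DecidableRel A2]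
    {u1 v1 : V1} {v2 u2 : V2} (x y : HajosVerts V1 V2 v2) :
    Decidable (hajosJoin A1 A2 u1 v1 v2 u2 x y) :=
  inferInstanceAs (Decidable (
    (∃ a b : V1, x.1 = Sum.inl a ∧ y.1 = Sum.inl b ∧ A1 a b ∧ ¬(a = u1 ∧ b = v1)) ∨
    (∃ a b : V2, x.1 = Sum.inr a ∧ y.1 = Sum.inr b ∧ A2 a b) ∨
    (∃ b : V2, x.1 = Sum.inl v1 ∧ y.1 = Sum.inr b ∧ A2 v2 b ∧ b ≠ u2) ∨
    (∃ a : V2, x.1 = Sum.inr a ∧ y.1 = Sum.inl v1 ∧ A2 a v2) ∨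
    (x.1 = Sum.inl u1 ∧ y.1 = Sum.inr u2)))

instance {V : Type*} [Fintype V] {A : V → V → Prop} [DecidableRel A] {I : Set V}
    [DecidablePred (· ∈ I)] :
    ∀ x y : Option {x : V // x ∉ I}, Decidable (identifyAdj A I x y)
  | some a, some b => inferInstanceAs (Decidable (A a.1 b.1))
  | none, some b => inferInstanceAs (Decidable (∃ u ∈ I, A u b.1))
  | some a, none => inferInstanceAs (Decidable (∃ u ∈ I, A a.1 u))
  | none, none => inferInstanceAs (Decidable False)


theorem s1 : HajosConstructible 3 5 (fun u v : Fin 5 => u.val * 16 + v.val ∈ ([2, 3, 16, 18, 20, 32, 33, 49, 52, 65, 67] : List ℕ)) :=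
  @HajosConstructible.join 3 3 3 5 (fun u v => u ≠ v) (fun u v => u ≠ v) 0 1 0 1 (fun u v : Fin 5 => u.val * 16 + v.val ∈ ([2, 3, 16, 18, 20, 32, 33, 49, 52, 65, 67] : List ℕ))
    HajosConstructible.base HajosConstructible.base (by decide) (by decide)
    (Equiv.ofBijective (fun x => Sum.elim ![(0 : Fin 5), (1 : Fin 5), (2 : Fin 5)] ![(0 : Fin 5), (3 : Fin 5), (4 : Fin 5)] (Subtype.val x)) (by decide))
    (by decide)

theorem s2 : HajosConstructible 3 9 (fun u v : Fin 9 => u.val * 16 + v.val ∈ ([2, 3, 16, 18, 20, 22, 24, 32, 33, 52, 53, 65, 67, 86, 87, 97, 101, 113, 120, 129, 135] : List ℕ)) :=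
  @HajosConstructible.join 3 5 5 9 (fun u v : Fin 5 => u.val * 16 + v.val ∈ ([2, 3, 16, 18, 20, 32, 33, 49, 52, 65, 67] : List ℕ)) (fun u v : Fin 5 => u.val * 16 + v.val ∈ ([2, 3, 16, 18, 20, 32, 33, 49, 52, 65, 67] : List ℕ)) 3 1 1 0 (fun u v : Fin 9 => u.val * 16 + v.val ∈ ([2, 3, 16, 18, 20, 22, 24, 32, 33, 52, 53, 65, 67, 86, 87, 97, 101, 113, 120, 129, 135] : List ℕ))
    s1 s1 (by decide) (by decide)
    (Equiv.ofBijective (fun x => Sum.elim ![(0 : Fin 9), (1 : Fin 9), (2 : Fin 9), (3 : Fin 9), (4 : Fin 9)] ![(5 : Fin 9), (0 : Fin 9), (6 : Fin 9), (7 : Fin 9), (8 : Fin 9)] (Subtype.val x)) (by decide))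
    (by decide)

theorem s3 : HajosConstructible 3 8 (fun u v : Fin 8 => u.val * 16 + v.val ∈ ([2, 3, 5, 6, 16, 18, 20, 21, 23, 32, 33, 48, 52, 65, 67, 80, 81, 97, 103, 113, 118] : List ℕ)) :=
  @HajosConstructible.ident 3 9 8 (fun u v : Fin 9 => u.val * 16 + v.val ∈ ([2, 3, 16, 18, 20, 22, 24, 32, 33, 52, 53, 65, 67, 86, 87, 97, 101, 113, 120, 129, 135] : List ℕ)) (Set.ofPred (fun w : Fin 9 => w.val = 0 ∨ w.val = 5)) (fun u v : Fin 8 => u.val * 16 + v.val ∈ ([2, 3, 5, 6, 16, 18, 20, 21, 23, 32, 33, 48, 52, 65, 67, 80, 81, 97, 103, 113, 118] : List ℕ))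
    s2 ⟨0, Or.inl rfl⟩ (by decide)
    (Equiv.ofBijective (fun o => Option.elim o (0 : Fin 8) (fun x => ![(0 : Fin 8), (1 : Fin 8), (2 : Fin 8), (3 : Fin 8), (4 : Fin 8), (0 : Fin 8), (5 : Fin 8), (6 : Fin 8), (7 : Fin 8)] x.val)) (by decide))
    (by decide)

theorem s4 : HajosConstructible 3 7 (fun u v : Fin 7 => u.val * 16 + v.val ∈ ([2, 3, 5, 16, 18, 20, 22, 32, 33, 48, 52, 65, 67, 81, 86, 97, 101] : List ℕ)) :=
  @HajosConstructible.ident 3 8 7 (fun u v : Fin 8 => u.val * 16 + v.val ∈ ([2, 3, 5, 6, 16, 18, 20, 21, 23, 32, 33, 48, 52, 65, 67, 80, 81, 97, 103, 113, 118] : List ℕ)) (Set.ofPred (fun w : Fin 8 => w.val = 2 ∨ w.val = 5)) (fun u v : Fin 7 => u.val * 16 + v.val ∈ ([2, 3, 5, 16, 18, 20, 22, 32, 33, 48, 52, 65, 67, 81, 86, 97, 101] : List ℕ))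
    s3 ⟨2, Or.inl rfl⟩ (by decide)
    (Equiv.ofBijective (fun o => Option.elim o (2 : Fin 7) (fun x => ![(0 : Fin 7), (1 : Fin 7), (2 : Fin 7), (3 : Fin 7), (4 : Fin 7), (0 : Fin 7), (5 : Fin 7), (6 : Fin 7)] x.val)) (by decide))
    (by decide)

theorem s5 : HajosConstructible 3 6 (fun u v : Fin 6 => u.val * 16 + v.val ∈ ([2, 3, 5, 16, 18, 20, 32, 33, 48, 52, 65, 67, 69, 81, 84] : List ℕ)) :=
  @HajosConstructible.ident 3 7 6 (fun u v : Fin 7 => u.val * 16 + v.val ∈ ([2, 3, 5, 16, 18, 20, 22, 32, 33, 48, 52, 65, 67, 81, 86, 97, 101] : List ℕ)) (Set.ofPred (fun w : Fin 7 => w.val = 4 ∨ w.val = 6)) (fun u v : Fin 6 => u.val * 16 + v.val ∈ ([2, 3, 5, 16, 18, 20, 32, 33, 48, 52, 65, 67, 69, 81, 84] : List ℕ))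
    s4 ⟨4, Or.inl rfl⟩ (by decide)
    (Equiv.ofBijective (fun o => Option.elim o (4 : Fin 6) (fun x => ![(0 : Fin 6), (1 : Fin 6), (2 : Fin 6), (3 : Fin 6), (4 : Fin 6), (5 : Fin 6), (0 : Fin 6)] x.val)) (by decide))
    (by decide)

theorem s6 : HajosConstructible 3 5 (fun u v : Fin 5 => u.val * 16 + v.val ∈ ([2, 3, 16, 18, 20, 32, 33, 48, 49, 52, 65, 67] : List ℕ)) :=
  @HajosConstructible.ident 3 6 5 (fun u v : Fin 6 => u.val * 16 + v.val ∈ ([2, 3, 5, 16, 18, 20, 32, 33, 48, 52, 65, 67, 69, 81, 84] : List ℕ)) (Set.ofPred (fun w : Fin 6 => w.val = 3 ∨ w.val = 5)) (fun u v : Fin 5 => u.val * 16 + v.val ∈ ([2, 3, 16, 18, 20, 32, 33, 48, 49, 52, 65, 67] : List ℕ))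
    s5 ⟨3, Or.inl rfl⟩ (by decide)
    (Equiv.ofBijective (fun o => Option.elim o (3 : Fin 5) (fun x => ![(0 : Fin 5), (1 : Fin 5), (2 : Fin 5), (3 : Fin 5), (4 : Fin 5), (0 : Fin 5)] x.val)) (by decide))
    (by decide)

theorem s7 : HajosConstructible 3 9 (fun u v : Fin 9 => u.val * 16 + v.val ∈ ([2, 3, 5, 8, 18, 20, 22, 32, 33, 48, 49, 52, 65, 67, 80, 87, 101, 103, 104, 117, 118, 128, 134] : List ℕ)) :=
  @HajosConstructible.join 3 5 5 9 (fun u v : Fin 5 => u.val * 16 + v.val ∈ ([2, 3, 16, 18, 20, 32, 33, 48, 49, 52, 65, 67] : List ℕ)) (fun u v : Fin 5 => u.val * 16 + v.val ∈ ([2, 3, 16, 18, 20, 32, 33, 48, 49, 52, 65, 67] : List ℕ)) 1 0 3 1 (fun u v : Fin 9 => u.val * 16 + v.val ∈ ([2, 3, 5, 8, 18, 20, 22, 32, 33, 48, 49, 52, 65, 67, 80, 87, 101, 103, 104, 117, 118, 128, 134] : List ℕ))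
    s6 s6 (by decide) (by decide)
    (Equiv.ofBijective (fun x => Sum.elim ![(0 : Fin 9), (1 : Fin 9), (2 : Fin 9), (3 : Fin 9), (4 : Fin 9)] ![(5 : Fin 9), (6 : Fin 9), (7 : Fin 9), (0 : Fin 9), (8 : Fin 9)] (Subtype.val x)) (by decide))
    (by decide)

theorem s8 : HajosConstructible 3 13 (fun u v : Fin 13 => u.val * 16 + v.val ∈ ([2, 3, 5, 8, 18, 20, 22, 32, 33, 48, 49, 52, 65, 67, 80, 87, 89, 92, 103, 104, 106, 117, 118, 128, 134, 149, 155, 169, 171, 172, 185, 186, 197, 202] : List ℕ)) :=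
  @HajosConstructible.join 3 9 5 13 (fun u v : Fin 9 => u.val * 16 + v.val ∈ ([2, 3, 5, 8, 18, 20, 22, 32, 33, 48, 49, 52, 65, 67, 80, 87, 101, 103, 104, 117, 118, 128, 134] : List ℕ)) (fun u v : Fin 5 => u.val * 16 + v.val ∈ ([2, 3, 16, 18, 20, 32, 33, 48, 49, 52, 65, 67] : List ℕ)) 6 5 3 1 (fun u v : Fin 13 => u.val * 16 + v.val ∈ ([2, 3, 5, 8, 18, 20, 22, 32, 33, 48, 49, 52, 65, 67, 80, 87, 89, 92, 103, 104, 106, 117, 118, 128, 134, 149, 155, 169, 171, 172, 185, 186, 197, 202] : List ℕ))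
    s7 s6 (by decide) (by decide)
    (Equiv.ofBijective (fun x => Sum.elim ![(0 : Fin 13), (1 : Fin 13), (2 : Fin 13), (3 : Fin 13), (4 : Fin 13), (5 : Fin 13), (6 : Fin 13), (7 : Fin 13), (8 : Fin 13)] ![(9 : Fin 13), (10 : Fin 13), (11 : Fin 13), (0 : Fin 13), (12 : Fin 13)] (Subtype.val x)) (by decide))
    (by decide)

theorem s9 : HajosConstructible 3 12 (fun u v : Fin 12 => u.val * 16 + v.val ∈ ([2, 3, 5, 8, 10, 18, 20, 22, 32, 33, 48, 49, 52, 65, 67, 80, 87, 89, 103, 104, 106, 117, 118, 128, 134, 149, 155, 160, 169, 171, 185, 186] : List ℕ)) :=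
  @HajosConstructible.ident 3 13 12 (fun u v : Fin 13 => u.val * 16 + v.val ∈ ([2, 3, 5, 8, 18, 20, 22, 32, 33, 48, 49, 52, 65, 67, 80, 87, 89, 92, 103, 104, 106, 117, 118, 128, 134, 149, 155, 169, 171, 172, 185, 186, 197, 202] : List ℕ)) (Set.ofPred (fun w : Fin 13 => w.val = 0 ∨ w.val = 12)) (fun u v : Fin 12 => u.val * 16 + v.val ∈ ([2, 3, 5, 8, 10, 18, 20, 22, 32, 33, 48, 49, 52, 65, 67, 80, 87, 89, 103, 104, 106, 117, 118, 128, 134, 149, 155, 160, 169, 171, 185, 186] : List ℕ))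
    s8 ⟨0, Or.inl rfl⟩ (by decide)
    (Equiv.ofBijective (fun o => Option.elim o (0 : Fin 12) (fun x => ![(0 : Fin 12), (1 : Fin 12), (2 : Fin 12), (3 : Fin 12), (4 : Fin 12), (5 : Fin 12), (6 : Fin 12), (7 : Fin 12), (8 : Fin 12), (9 : Fin 12), (10 : Fin 12), (11 : Fin 12), (0 : Fin 12)] x.val)) (by decide))
    (by decide)

theorem s10 : HajosConstructible 3 11 (fun u v : Fin 11 => u.val * 16 + v.val ∈ ([2, 3, 7, 9, 18, 20, 21, 32, 33, 38, 40, 48, 49, 52, 65, 67, 86, 87, 89, 98, 101, 112, 117, 130, 138, 144, 152, 154, 168, 169] : List ℕ)) :=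
  @HajosConstructible.ident 3 12 11 (fun u v : Fin 12 => u.val * 16 + v.val ∈ ([2, 3, 5, 8, 10, 18, 20, 22, 32, 33, 48, 49, 52, 65, 67, 80, 87, 89, 103, 104, 106, 117, 118, 128, 134, 149, 155, 160, 169, 171, 185, 186] : List ℕ)) (Set.ofPred (fun w : Fin 12 => w.val = 2 ∨ w.val = 5)) (fun u v : Fin 11 => u.val * 16 + v.val ∈ ([2, 3, 7, 9, 18, 20, 21, 32, 33, 38, 40, 48, 49, 52, 65, 67, 86, 87, 89, 98, 101, 112, 117, 130, 138, 144, 152, 154, 168, 169] : List ℕ))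
    s9 ⟨2, Or.inl rfl⟩ (by decide)
    (Equiv.ofBijective (fun o => Option.elim o (2 : Fin 11) (fun x => ![(0 : Fin 11), (1 : Fin 11), (2 : Fin 11), (3 : Fin 11), (4 : Fin 11), (0 : Fin 11), (5 : Fin 11), (6 : Fin 11), (7 : Fin 11), (8 : Fin 11), (9 : Fin 11), (10 : Fin 11)] x.val)) (by decide))
    (by decide)

theorem s11 : HajosConstructible 3 10 (fun u v : Fin 10 => u.val * 16 + v.val ∈ ([2, 3, 6, 8, 18, 20, 21, 32, 33, 39, 48, 49, 52, 65, 67, 81, 86, 88, 96, 101, 114, 121, 128, 135, 137, 151, 152] : List ℕ)) :=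
  @HajosConstructible.ident 3 11 10 (fun u v : Fin 11 => u.val * 16 + v.val ∈ ([2, 3, 7, 9, 18, 20, 21, 32, 33, 38, 40, 48, 49, 52, 65, 67, 86, 87, 89, 98, 101, 112, 117, 130, 138, 144, 152, 154, 168, 169] : List ℕ)) (Set.ofPred (fun w : Fin 11 => w.val = 1 ∨ w.val = 6)) (fun u v : Fin 10 => u.val * 16 + v.val ∈ ([2, 3, 6, 8, 18, 20, 21, 32, 33, 39, 48, 49, 52, 65, 67, 81, 86, 88, 96, 101, 114, 121, 128, 135, 137, 151, 152] : List ℕ))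
    s10 ⟨1, Or.inl rfl⟩ (by decide)
    (Equiv.ofBijective (fun o => Option.elim o (1 : Fin 10) (fun x => ![(0 : Fin 10), (1 : Fin 10), (2 : Fin 10), (3 : Fin 10), (4 : Fin 10), (5 : Fin 10), (0 : Fin 10), (6 : Fin 10), (7 : Fin 10), (8 : Fin 10), (9 : Fin 10)] x.val)) (by decide))
    (by decide)

theorem s12 : HajosConstructible 3 9 (fun u v : Fin 9 => u.val * 16 + v.val ∈ ([2, 3, 6, 7, 18, 20, 21, 24, 32, 33, 48, 49, 52, 65, 67, 81, 86, 87, 96, 101, 112, 113, 120, 129, 135] : List ℕ)) :=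
  @HajosConstructible.ident 3 10 9 (fun u v : Fin 10 => u.val * 16 + v.val ∈ ([2, 3, 6, 8, 18, 20, 21, 32, 33, 39, 48, 49, 52, 65, 67, 81, 86, 88, 96, 101, 114, 121, 128, 135, 137, 151, 152] : List ℕ)) (Set.ofPred (fun w : Fin 10 => w.val = 1 ∨ w.val = 7)) (fun u v : Fin 9 => u.val * 16 + v.val ∈ ([2, 3, 6, 7, 18, 20, 21, 24, 32, 33, 48, 49, 52, 65, 67, 81, 86, 87, 96, 101, 112, 113, 120, 129, 135] : List ℕ))
    s11 ⟨1, Or.inl rfl⟩ (by decide)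
    (Equiv.ofBijective (fun o => Option.elim o (1 : Fin 9) (fun x => ![(0 : Fin 9), (1 : Fin 9), (2 : Fin 9), (3 : Fin 9), (4 : Fin 9), (5 : Fin 9), (6 : Fin 9), (0 : Fin 9), (7 : Fin 9), (8 : Fin 9)] x.val)) (by decide))
    (by decide)

theorem s13 : HajosConstructible 3 8 (fun u v : Fin 8 => u.val * 16 + v.val ∈ ([2, 3, 5, 6, 18, 20, 23, 32, 33, 48, 49, 52, 65, 67, 69, 70, 80, 84, 96, 97, 103, 113, 118] : List ℕ)) :=
  @HajosConstructible.ident 3 9 8 (fun u v : Fin 9 => u.val * 16 + v.val ∈ ([2, 3, 6, 7, 18, 20, 21, 24, 32, 33, 48, 49, 52, 65, 67, 81, 86, 87, 96, 101, 112, 113, 120, 129, 135] : List ℕ)) (Set.ofPred (fun w : Fin 9 => w.val = 4 ∨ w.val = 5)) (fun u v : Fin 8 => u.val * 16 + v.val ∈ ([2, 3, 5, 6, 18, 20, 23, 32, 33, 48, 49, 52, 65, 67, 69, 70, 80, 84, 96, 97, 103, 113, 118] : List ℕ))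
    s12 ⟨4, Or.inl rfl⟩ (by decide)
    (Equiv.ofBijective (fun o => Option.elim o (4 : Fin 8) (fun x => ![(0 : Fin 8), (1 : Fin 8), (2 : Fin 8), (3 : Fin 8), (4 : Fin 8), (0 : Fin 8), (5 : Fin 8), (6 : Fin 8), (7 : Fin 8)] x.val)) (by decide))
    (by decide)

theorem s14 : HajosConstructible 3 7 (fun u v : Fin 7 => u.val * 16 + v.val ∈ ([2, 3, 5, 6, 18, 20, 32, 33, 48, 49, 52, 65, 67, 69, 70, 80, 84, 96, 97, 100] : List ℕ)) :=
  @HajosConstructible.ident 3 8 7 (fun u v : Fin 8 => u.val * 16 + v.val ∈ ([2, 3, 5, 6, 18, 20, 23, 32, 33, 48, 49, 52, 65, 67, 69, 70, 80, 84, 96, 97, 103, 113, 118] : List ℕ)) (Set.ofPred (fun w : Fin 8 => w.val = 4 ∨ w.val = 7)) (fun u v : Fin 7 => u.val * 16 + v.val ∈ ([2, 3, 5, 6, 18, 20, 32, 33, 48, 49, 52, 65, 67, 69, 70, 80, 84, 96, 97, 100] : List ℕ))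
    s13 ⟨4, Or.inl rfl⟩ (by decide)
    (Equiv.ofBijective (fun o => Option.elim o (4 : Fin 7) (fun x => ![(0 : Fin 7), (1 : Fin 7), (2 : Fin 7), (3 : Fin 7), (4 : Fin 7), (5 : Fin 7), (6 : Fin 7), (0 : Fin 7)] x.val)) (by decide))
    (by decide)

theorem s15 : HajosConstructible 3 6 (fun u v : Fin 6 => u.val * 16 + v.val ∈ ([2, 3, 5, 18, 20, 32, 33, 48, 49, 52, 65, 67, 69, 80, 81, 84] : List ℕ)) :=
  @HajosConstructible.ident 3 7 6 (fun u v : Fin 7 => u.val * 16 + v.val ∈ ([2, 3, 5, 6, 18, 20, 32, 33, 48, 49, 52, 65, 67, 69, 70, 80, 84, 96, 97, 100] : List ℕ)) (Set.ofPred (fun w : Fin 7 => w.val = 3 ∨ w.val = 5)) (fun u v : Fin 6 => u.val * 16 + v.val ∈ ([2, 3, 5, 18, 20, 32, 33, 48, 49, 52, 65, 67, 69, 80, 81, 84] : List ℕ))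
    s14 ⟨3, Or.inl rfl⟩ (by decide)
    (Equiv.ofBijective (fun o => Option.elim o (3 : Fin 6) (fun x => ![(0 : Fin 6), (1 : Fin 6), (2 : Fin 6), (3 : Fin 6), (4 : Fin 6), (0 : Fin 6), (5 : Fin 6)] x.val)) (by decide))
    (by decide)

theorem s16 : HajosConstructible 3 5 (fun u v : Fin 5 => u.val * 16 + v.val ∈ ([2, 3, 18, 20, 32, 33, 48, 49, 52, 65, 67] : List ℕ)) :=
  @HajosConstructible.ident 3 6 5 (fun u v : Fin 6 => u.val * 16 + v.val ∈ ([2, 3, 5, 18, 20, 32, 33, 48, 49, 52, 65, 67, 69, 80, 81, 84] : List ℕ)) (Set.ofPred (fun w : Fin 6 => w.val = 3 ∨ w.val = 5)) (fun u v : Fin 5 => u.val * 16 + v.val ∈ ([2, 3, 18, 20, 32, 33, 48, 49, 52, 65, 67] : List ℕ))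
    s15 ⟨3, Or.inl rfl⟩ (by decide)
    (Equiv.ofBijective (fun o => Option.elim o (3 : Fin 5) (fun x => ![(0 : Fin 5), (1 : Fin 5), (2 : Fin 5), (3 : Fin 5), (4 : Fin 5), (0 : Fin 5)] x.val)) (by decide))
    (by decide)

theorem s17 : HajosConstructible 3 9 (fun u v : Fin 9 => u.val * 16 + v.val ∈ ([2, 3, 18, 20, 21, 24, 32, 33, 48, 52, 54, 65, 67, 81, 87, 103, 104, 117, 118, 129, 134] : List ℕ)) :=
  @HajosConstructible.join 3 5 5 9 (fun u v : Fin 5 => u.val * 16 + v.val ∈ ([2, 3, 18, 20, 32, 33, 48, 49, 52, 65, 67] : List ℕ)) (fun u v : Fin 5 => u.val * 16 + v.val ∈ ([2, 3, 18, 20, 32, 33, 48, 49, 52, 65, 67] : List ℕ)) 3 1 3 1 (fun u v : Fin 9 => u.val * 16 + v.val ∈ ([2, 3, 18, 20, 21, 24, 32, 33, 48, 52, 54, 65, 67, 81, 87, 103, 104, 117, 118, 129, 134] : List ℕ))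
    s16 s16 (by decide) (by decide)
    (Equiv.ofBijective (fun x => Sum.elim ![(0 : Fin 9), (1 : Fin 9), (2 : Fin 9), (3 : Fin 9), (4 : Fin 9)] ![(5 : Fin 9), (6 : Fin 9), (7 : Fin 9), (0 : Fin 9), (8 : Fin 9)] (Subtype.val x)) (by decide))
    (by decide)

theorem s18 : HajosConstructible 3 8 (fun u v : Fin 8 => u.val * 16 + v.val ∈ ([2, 3, 6, 7, 18, 20, 21, 23, 32, 33, 48, 52, 65, 67, 81, 86, 96, 101, 112, 113] : List ℕ)) :=
  @HajosConstructible.ident 3 9 8 (fun u v : Fin 9 => u.val * 16 + v.val ∈ ([2, 3, 18, 20, 21, 24, 32, 33, 48, 52, 54, 65, 67, 81, 87, 103, 104, 117, 118, 129, 134] : List ℕ)) (Set.ofPred (fun w : Fin 9 => w.val = 0 ∨ w.val = 6)) (fun u v : Fin 8 => u.val * 16 + v.val ∈ ([2, 3, 6, 7, 18, 20, 21, 23, 32, 33, 48, 52, 65, 67, 81, 86, 96, 101, 112, 113] : List ℕ))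
    s17 ⟨0, Or.inl rfl⟩ (by decide)
    (Equiv.ofBijective (fun o => Option.elim o (0 : Fin 8) (fun x => ![(0 : Fin 8), (1 : Fin 8), (2 : Fin 8), (3 : Fin 8), (4 : Fin 8), (5 : Fin 8), (0 : Fin 8), (6 : Fin 8), (7 : Fin 8)] x.val)) (by decide))
    (by decide)

theorem s19 : HajosConstructible 3 7 (fun u v : Fin 7 => u.val * 16 + v.val ∈ ([2, 3, 6, 18, 20, 21, 32, 33, 48, 52, 65, 67, 81, 86, 96, 101] : List ℕ)) :=
  @HajosConstructible.ident 3 8 7 (fun u v : Fin 8 => u.val * 16 + v.val ∈ ([2, 3, 6, 7, 18, 20, 21, 23, 32, 33, 48, 52, 65, 67, 81, 86, 96, 101, 112, 113] : List ℕ)) (Set.ofPred (fun w : Fin 8 => w.val = 2 ∨ w.val = 7)) (fun u v : Fin 7 => u.val * 16 + v.val ∈ ([2, 3, 6, 18, 20, 21, 32, 33, 48, 52, 65, 67, 81, 86, 96, 101] : List ℕ))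
    s18 ⟨2, Or.inl rfl⟩ (by decide)
    (Equiv.ofBijective (fun o => Option.elim o (2 : Fin 7) (fun x => ![(0 : Fin 7), (1 : Fin 7), (2 : Fin 7), (3 : Fin 7), (4 : Fin 7), (5 : Fin 7), (6 : Fin 7), (0 : Fin 7)] x.val)) (by decide))
    (by decide)

theorem s20 : HajosConstructible 3 6 (fun u v : Fin 6 => u.val * 16 + v.val ∈ ([2, 3, 5, 18, 20, 32, 33, 48, 52, 65, 67, 69, 80, 84] : List ℕ)) :=
  @HajosConstructible.ident 3 7 6 (fun u v : Fin 7 => u.val * 16 + v.val ∈ ([2, 3, 6, 18, 20, 21, 32, 33, 48, 52, 65, 67, 81, 86, 96, 101] : List ℕ)) (Set.ofPred (fun w : Fin 7 => w.val = 4 ∨ w.val = 5)) (fun u v : Fin 6 => u.val * 16 + v.val ∈ ([2, 3, 5, 18, 20, 32, 33, 48, 52, 65, 67, 69, 80, 84] : List ℕ))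
    s19 ⟨4, Or.inl rfl⟩ (by decide)
    (Equiv.ofBijective (fun o => Option.elim o (4 : Fin 6) (fun x => ![(0 : Fin 6), (1 : Fin 6), (2 : Fin 6), (3 : Fin 6), (4 : Fin 6), (0 : Fin 6), (5 : Fin 6)] x.val)) (by decide))
    (by decide)

theorem s21 : HajosConstructible 3 5 (fun u v : Fin 5 => (v.val = (u.val + 1) % 5) ∨ (u.val = (v.val + 1) % 5)) :=
  @HajosConstructible.ident 3 6 5 (fun u v : Fin 6 => u.val * 16 + v.val ∈ ([2, 3, 5, 18, 20, 32, 33, 48, 52, 65, 67, 69, 80, 84] : List ℕ)) (Set.ofPred (fun w : Fin 6 => w.val = 3 ∨ w.val = 5)) (fun u v : Fin 5 => (v.val = (u.val + 1) % 5) ∨ (u.val = (v.val + 1) % 5))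
    s20 ⟨3, Or.inl rfl⟩ (by decide)
    (Equiv.ofBijective (fun o => Option.elim o (4 : Fin 5) (fun x => ![(0 : Fin 5), (2 : Fin 5), (1 : Fin 5), (4 : Fin 5), (3 : Fin 5), (0 : Fin 5)] x.val)) (by decide))
    (by decide)


/-- The symmetric 5-cycle `D(C5)` (digons `v0v1, v1v2, v2v3, v3v4, v4v0`)
is Hajós-3-constructible. -/
theorem C5_hajos_three_constructible :
    HajosConstructible 3 5
      (fun u v : Fin 5 => (v.val = (u.val + 1) % 5) ∨ (u.val = (v.val + 1) % 5)) := s21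
end
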